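/- Let A, B be bounded selfadjoint operators on a complex Hilbert space H with spectra in [0,1]. Then for every unit vector x ∈ H, ∫_0^1 ⟨(tA+(1-t)B)x,x⟩ ⟨(tA+(1-t)B)²x,x⟩ dt ≤ (1/2) ⟨(A³ + B³)x,x⟩. -/

import Mathlib

open ContinuousLinearMap in
set_option synthInstance.maxHeartbeats 1000000 in
theorem posCS {H : Type*} [NormedAddCommGroup H] [InnerProductSpace ℂ H] [CompleteSpace H]
    (T : H →L[ℂ] H) (hT : T.IsPositive) (u v : H) :
    (inner ℂ (T u) v : ℂ).re ^ 2 ≤ (inner ℂ (T u) u : ℂ).re * (inner ℂ (T v) v : ℂ).re := by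
  have hT0 : (0:H →L[ℂ] H) ≤ T := (ContinuousLinearMap.nonneg_iff_isPositive T).mpr hT
  set S := CFC.sqrt T with hSdef
  have hS0 : (0:H →L[ℂ] H) ≤ S := CFC.sqrt_nonneg T
  have hSsa : IsSelfAdjoint S := IsSelfAdjoint.of_nonneg hS0
  have hS2 : S ^ 2 = T := CFC.sq_sqrt T hT0
  have key : ∀ w z : H, (inner ℂ (T w) z : ℂ) = inner ℂ (S w) (S z) := by
    intro w z
    rw [← hS2]
    have : (S ^ 2) w = S (S w) := by simp [sq, ContinuousLinearMap.mul_apply]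
    rw [this, ← ContinuousLinearMap.adjoint_inner_left,
      (ContinuousLinearMap.isSelfAdjoint_iff').mp hSsa]
  have h1 : |(inner ℂ (T u) v : ℂ).re| ≤ ‖S u‖ * ‖S v‖ := by
    rw [key]
    calc |(inner ℂ (S u) (S v) : ℂ).re| ≤ ‖(inner ℂ (S u) (S v) : ℂ)‖ := Complex.abs_re_le_norm _
      _ ≤ ‖S u‖ * ‖S v‖ := norm_inner_le_norm _ _
  have h2 : (inner ℂ (T u) u : ℂ).re = ‖S u‖ ^ 2 := by
    rw [key]; exact inner_self_eq_norm_sq (𝕜 := ℂ) (S u)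
  have h3 : (inner ℂ (T v) v : ℂ).re = ‖S v‖ ^ 2 := by
    rw [key]; exact inner_self_eq_norm_sq (𝕜 := ℂ) (S v)
  rw [h2, h3]
  calc (inner ℂ (T u) v : ℂ).re ^ 2 = |(inner ℂ (T u) v : ℂ).re| ^ 2 := (sq_abs _).symm
    _ ≤ (‖S u‖ * ‖S v‖) ^ 2 := pow_le_pow_left₀ (abs_nonneg _) h1 2
    _ = ‖S u‖ ^ 2 * ‖S v‖ ^ 2 := by ring


open ContinuousLinearMap in
set_option synthInstance.maxHeartbeats 1000000 in
theorem op_facts {H : Type*} [NormedAddCommGroup H] [InnerProductSpace ℂ H] [CompleteSpace H]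
    (A : H →L[ℂ] H) (hA : IsSelfAdjoint A)
    (hspA : spectrum ℝ A ⊆ Set.Icc (0:ℝ) 1) (x : H) (hx : ‖x‖ = 1) :
    0 ≤ (inner ℂ (A x) x : ℂ).re ∧ (inner ℂ (A x) x : ℂ).re ≤ 1 ∧
    (inner ℂ (A x) x : ℂ).re ^ 2 ≤ ‖A x‖^2 ∧
    (‖A x‖^2)^2 ≤ (inner ℂ ((A^3) x) x : ℂ).re * (inner ℂ (A x) x : ℂ).re ∧
    0 ≤ (inner ℂ ((A^3) x) x : ℂ).re := by
  have posA : A.IsPositive := by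
    rw [← ContinuousLinearMap.nonneg_iff_isPositive,
      StarOrderedRing.nonneg_iff_spectrum_nonneg (R := ℝ) A hA]
    exact fun μ hμ => (hspA hμ).1
  have hA1sa : IsSelfAdjoint (1 - A) := (IsSelfAdjoint.one (R := H →L[ℂ] H)).sub hA
  have pos1A : (1 - A).IsPositive := by
    rw [← ContinuousLinearMap.nonneg_iff_isPositive,
      StarOrderedRing.nonneg_iff_spectrum_nonneg (R := ℝ) _ hA1sa]
    intro μ hμ
    have h1 : (1 : H →L[ℂ] H) = algebraMap ℝ _ (1:ℝ) := by simp
    rw [h1, ← spectrum.singleton_sub_eq, Set.mem_sub] at hμ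
    obtain ⟨r, hr, s, hs, rfl⟩ := hμ
    rw [Set.mem_singleton_iff] at hr
    subst hr
    have := (hspA hs).2
    linarith
  have hsym : ∀ u v : H, (inner ℂ (A u) v : ℂ) = inner ℂ u (A v) :=
    (ContinuousLinearMap.isSelfAdjoint_iff_isSymmetric.mp hA)
  have ha1 : 0 ≤ (inner ℂ (A x) x : ℂ).re := (Complex.nonneg_iff.mp (posA.inner_nonneg_left x)).1
  have ha1' : (inner ℂ (A x) x : ℂ).re ≤ 1 := by
    have h0 : 0 ≤ (inner ℂ ((1 - A) x) x : ℂ).re := (Complex.nonneg_iff.mp (pos1A.inner_nonneg_left x)).1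
    have he : ((1 - A) x) = x - A x := by simp
    rw [he, inner_sub_left] at h0
    have hxx : (inner ℂ x x : ℂ).re = 1 := by
      have h := inner_self_eq_norm_sq (𝕜 := ℂ) x
      rw [hx] at h; exact h.trans (by norm_num)
    simp only [Complex.sub_re] at h0
    linarith
  have ha12 : (inner ℂ (A x) x : ℂ).re ^ 2 ≤ ‖A x‖^2 := by
    have h1 : |(inner ℂ (A x) x : ℂ).re| ≤ ‖A x‖ := by
      calc |(inner ℂ (A x) x : ℂ).re| ≤ ‖(inner ℂ (A x) x : ℂ)‖ := Complex.abs_re_le_norm _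
        _ ≤ ‖A x‖ * ‖x‖ := norm_inner_le_norm _ _
        _ = ‖A x‖ := by rw [hx, mul_one]
    calc (inner ℂ (A x) x : ℂ).re ^ 2 = |(inner ℂ (A x) x : ℂ).re| ^ 2 := (sq_abs _).symm
      _ ≤ ‖A x‖ ^ 2 := by exact pow_le_pow_left₀ (abs_nonneg _) h1 2
  have ha2e : ‖A x‖^2 = (inner ℂ (A (A x)) x : ℂ).re := by
    rw [hsym (A x) x]
    exact (inner_self_eq_norm_sq (𝕜 := ℂ) (A x)).symm
  have hA3 : (A^3) x = A (A (A x)) := by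
    simp [pow_succ, ContinuousLinearMap.mul_apply]
  have hale : (inner ℂ ((A^3) x) x : ℂ).re = (inner ℂ (A (A x)) (A x) : ℂ).re := by
    rw [hA3, hsym (A (A x)) x]
  have hal : 0 ≤ (inner ℂ ((A^3) x) x : ℂ).re := by
    rw [hale]; exact (Complex.nonneg_iff.mp (posA.inner_nonneg_left (A x))).1
  have haCS : (‖A x‖^2)^2 ≤ (inner ℂ ((A^3) x) x : ℂ).re * (inner ℂ (A x) x : ℂ).re := by
    rw [ha2e, hale]
    exact posCS A posA (A x) x
  exact ⟨ha1, ha1', ha12, haCS, hal⟩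

theorem core_ineq (a1 a2 b1 b2 : ℝ)
    (ha1 : 0 ≤ a1) (ha1' : a1 ≤ 1) (hb1 : 0 ≤ b1) (hb1' : b1 ≤ 1)
    (ha2 : 0 ≤ a2) (hb2 : 0 ≤ b2)
    (ha12 : a1 ^ 2 ≤ a2) (hb12 : b1 ^ 2 ≤ b2) :
    0 ≤ a2^2*b1 + a1*b2^2 - a1^2*b1*b2 - a1*a2*b1^2 := by
  rcases le_total (a1*b1) a2 with h | h <;> rcases le_total (a1*b1) b2 with h' | h'
  · nlinarith [mul_nonneg (mul_nonneg ha2 hb1) (sub_nonneg.2 h),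
      mul_nonneg (mul_nonneg ha1 hb2) (sub_nonneg.2 h')]
  · -- a2 ≥ a1b1 ≥ b2
    rcases eq_or_lt_of_le hb1 with rfl | h0
    · nlinarith [mul_nonneg hb1 (sq_nonneg a2), mul_nonneg ha1 (sq_nonneg b2)]
    · have hab : b1 ≤ a1 := by nlinarith
      have hneg : a1*b2*(a1*b1 - b2) ≤ a1*(a1*b1)*(a1*b1 - b1^2) := by
        nlinarith [mul_le_mul h' (by linarith : a1*b1 - b2 ≤ a1*b1 - b1^2)
          (by linarith : (0:ℝ) ≤ a1*b1 - b2) (by positivity : (0:ℝ) ≤ a1*b1), ha1]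
      have hpos : a1^2*b1*(a1*(a1-b1)) ≤ a2*b1*(a2 - a1*b1) := by
        nlinarith [mul_le_mul (by nlinarith : a1^2*b1 ≤ a2*b1)
          (by nlinarith : a1*(a1-b1) ≤ a2 - a1*b1)
          (by nlinarith : (0:ℝ) ≤ a1*(a1-b1)) (mul_nonneg ha2 hb1)]
      nlinarith [hpos, hneg, mul_nonneg (mul_nonneg (sq_nonneg a1) hb1) (sq_nonneg (a1-b1))]
  · -- symmetric
    rcases eq_or_lt_of_le ha1 with rfl | h0
    · nlinarith [mul_nonneg hb1 (sq_nonneg a2)]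
    · have hab : a1 ≤ b1 := by nlinarith
      have hneg : b1*a2*(a1*b1 - a2) ≤ b1*(a1*b1)*(a1*b1 - a1^2) := by
        nlinarith [mul_le_mul h (by linarith : a1*b1 - a2 ≤ a1*b1 - a1^2)
          (by linarith : (0:ℝ) ≤ a1*b1 - a2) (by positivity : (0:ℝ) ≤ a1*b1), hb1]
      have hpos : b1^2*a1*(b1*(b1-a1)) ≤ b2*a1*(b2 - a1*b1) := by
        nlinarith [mul_le_mul (by nlinarith : b1^2*a1 ≤ b2*a1)
          (by nlinarith : b1*(b1-a1) ≤ b2 - a1*b1)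
          (by nlinarith : (0:ℝ) ≤ b1*(b1-a1)) (mul_nonneg hb2 ha1)]
      nlinarith [hpos, hneg, mul_nonneg (mul_nonneg (sq_nonneg b1) ha1) (sq_nonneg (a1-b1))]
  · -- both ≤ a1b1
    rcases eq_or_lt_of_le ha1 with rfl | h0
    · nlinarith [mul_nonneg hb1 (sq_nonneg a2)]
    rcases eq_or_lt_of_le hb1 with rfl | h0'
    · nlinarith [mul_nonneg ha1 (sq_nonneg b2)]
    have h1 : a1 ≤ b1 := by nlinarith
    have h2 : b1 ≤ a1 := by nlinarith
    have : a1 = b1 := le_antisymm h1 h2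
    subst this
    have hsq : a1*a1 = a1^2 := by ring
    rw [hsq] at h h'
    have e1 : a2 = a1^2 := le_antisymm h ha12
    have e2 : b2 = a1^2 := le_antisymm h' hb12
    subst e1; subst e2
    ring_nf
    exact le_rfl

theorem scalar_lemma (a1 a2 al b1 b2 be : ℝ)
    (ha1 : 0 ≤ a1) (ha1' : a1 ≤ 1) (hb1 : 0 ≤ b1) (hb1' : b1 ≤ 1)
    (ha2 : 0 ≤ a2) (hb2 : 0 ≤ b2)
    (ha12 : a1 ^ 2 ≤ a2) (hb12 : b1 ^ 2 ≤ b2)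
    (haCS : a2 ^ 2 ≤ al * a1) (hbCS : b2 ^ 2 ≤ be * b1)
    (hal : 0 ≤ al) (hbe : 0 ≤ be) :
    a1 * a2 / 3 + (a1 * b2 + a2 * b1) / 6 + b1 * b2 / 3 ≤ (al + be) / 2 := by
  have core := core_ineq a1 a2 b1 b2 ha1 ha1' hb1 hb1' ha2 hb2 ha12 hb12
  have hP : 0 ≤ 3*a2^2*b1 + 3*a1*b2^2 - (2*a1*a2 + a1*b2 + a2*b1 + 2*b1*b2)*(a1*b1) := by
    nlinarith [core, mul_nonneg (mul_nonneg ha2 hb1) (sub_nonneg.2 ha12),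
      mul_nonneg (mul_nonneg ha1 hb2) (sub_nonneg.2 hb12)]
  rcases eq_or_lt_of_le ha1 with rfl | h0a
  · have ha2z : a2 = 0 := by nlinarith
    rcases eq_or_lt_of_le hb1 with rfl | h0b
    · have hb2z : b2 = 0 := by nlinarith
      rw [ha2z, hb2z]; ring_nf; positivity
    · nlinarith [mul_le_mul_of_nonneg_right hbCS hb1, ha2z,
        mul_le_mul_of_nonneg_right hb12 hb2, mul_nonneg hal hb1, h0b]
  · rcases eq_or_lt_of_le hb1 with rfl | h0b
    · have hb2z : b2 = 0 := by nlinarith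
      nlinarith [mul_le_mul_of_nonneg_right haCS ha1, hb2z,
        mul_le_mul_of_nonneg_right ha12 ha2, mul_nonneg hbe ha1, h0a]
    · nlinarith [hP, mul_le_mul_of_nonneg_right haCS hb1,
        mul_le_mul_of_nonneg_right hbCS ha1, mul_pos h0a h0b]


theorem poly_int (c2 c1 c0 : ℝ) :
    ∫ t in (0:ℝ)..1, (c2*t^2 + c1*t + c0) = c2/3 + c1/2 + c0 := by
  have h2 : IntervalIntegrable (fun t:ℝ => c2*t^2) MeasureTheory.volume 0 1 :=
    (Continuous.intervalIntegrable (by continuity) _ _)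
  have h1 : IntervalIntegrable (fun t:ℝ => c1*t) MeasureTheory.volume 0 1 :=
    (Continuous.intervalIntegrable (by continuity) _ _)
  have h0 : IntervalIntegrable (fun t:ℝ => c0) MeasureTheory.volume 0 1 :=
    (Continuous.intervalIntegrable (by continuity) _ _)
  rw [intervalIntegral.integral_add (h2.add h1) h0, intervalIntegral.integral_add h2 h1,
    intervalIntegral.integral_const_mul, intervalIntegral.integral_const_mul,
    integral_pow, integral_id, intervalIntegral.integral_const]
  norm_num
  ring

theorem cube_example_synchronous
    {H : Type*} [NormedAddCommGroup H] [InnerProductSpace ℂ H] [CompleteSpace H]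
    (A B : H →L[ℂ] H) (hA : IsSelfAdjoint A) (hB : IsSelfAdjoint B)
    (hspA : spectrum ℝ A ⊆ Set.Icc (0:ℝ) 1) (hspB : spectrum ℝ B ⊆ Set.Icc (0:ℝ) 1)
    (x : H) (hx : ‖x‖ = 1) :
    (∫ t in (0:ℝ)..1,
        (inner ℂ ((t • A + (1 - t) • B) x) x : ℂ).re *
          (inner ℂ (((t • A + (1 - t) • B) ^ 2) x) x : ℂ).re) ≤
      (1/2) * (inner ℂ ((A ^ 3 + B ^ 3) x) x : ℂ).re := by
  obtain ⟨ha1, ha1', ha12, haCS, hal⟩ := op_facts A hA hspA x hx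
  obtain ⟨hb1, hb1', hb12, hbCS, hbe⟩ := op_facts B hB hspB x hx
  set a1 := (inner ℂ (A x) x : ℂ).re
  set b1 := (inner ℂ (B x) x : ℂ).re
  set al := (inner ℂ ((A^3) x) x : ℂ).re
  set be := (inner ℂ ((B^3) x) x : ℂ).re
  set a2 := ‖A x‖^2 with ha2def
  set b2 := ‖B x‖^2 with hb2def
  have ha2 : 0 ≤ a2 := by positivity
  have hb2 : 0 ≤ b2 := by positivity
  -- rewrite integrand
  have key : ∀ t : ℝ,
      (inner ℂ ((t • A + (1 - t) • B) x) x : ℂ).re *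
        (inner ℂ (((t • A + (1 - t) • B) ^ 2) x) x : ℂ).re
      = (t * a1 + (1 - t) * b1) * ‖t • (A x) + (1 - t) • (B x)‖^2 := by
    intro t
    set C := t • A + (1 - t) • B with hCdef
    have hCsa : IsSelfAdjoint C := ((IsSelfAdjoint.all t).smul hA).add ((IsSelfAdjoint.all (1 - t)).smul hB)
    have hCx : C x = t • (A x) + (1 - t) • (B x) := by
      simp [hCdef, ContinuousLinearMap.add_apply]
    have hf : (inner ℂ (C x) x : ℂ).re = t * a1 + (1 - t) * b1 := by
      rw [hCx, inner_add_left,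
        RCLike.real_smul_eq_coe_smul (K := ℂ) t (A x),
        RCLike.real_smul_eq_coe_smul (K := ℂ) (1 - t) (B x),
        inner_smul_left, inner_smul_left]
      simp [Complex.add_re, Complex.mul_re, Complex.conj_ofReal]; rfl
    have hg : (inner ℂ ((C ^ 2) x) x : ℂ).re = ‖C x‖^2 := by
      have h2 : (C ^ 2) x = C (C x) := by simp [sq, ContinuousLinearMap.mul_apply]
      have hsymC : (inner ℂ (C (C x)) x : ℂ) = inner ℂ (C x) (C x) :=
        (ContinuousLinearMap.isSelfAdjoint_iff_isSymmetric.mp hCsa) (C x) x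
      rw [h2, hsymC]
      exact inner_self_eq_norm_sq (𝕜 := ℂ) (C x)
    rw [hf, hg, hCx]
  simp only [key]
  -- pointwise bound and integral comparison
  have hGc : Continuous fun t : ℝ => (t * a1 + (1 - t) * b1) * ‖t • (A x) + (1 - t) • (B x)‖^2 := by
    fun_prop
  have hPc : Continuous fun t : ℝ => (t * a1 + (1 - t) * b1) * (t * a2 + (1 - t) * b2) := by
    fun_prop
  have hmono : (∫ t in (0:ℝ)..1, (t * a1 + (1 - t) * b1) * ‖t • (A x) + (1 - t) • (B x)‖^2)
      ≤ ∫ t in (0:ℝ)..1, (t * a1 + (1 - t) * b1) * (t * a2 + (1 - t) * b2) := by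
    apply intervalIntegral.integral_mono_on (by norm_num)
      (hGc.intervalIntegrable _ _) (hPc.intervalIntegrable _ _)
    intro t ht
    obtain ⟨ht0, ht1⟩ := ht
    have hfnn : 0 ≤ t * a1 + (1 - t) * b1 := by
      have := mul_nonneg ht0 ha1
      have := mul_nonneg (by linarith : (0:ℝ) ≤ 1 - t) hb1
      linarith
    have hnorm : ‖t • (A x) + (1 - t) • (B x)‖ ≤ t * ‖A x‖ + (1 - t) * ‖B x‖ := by
      refine (norm_add_le _ _).trans ?_
      rw [norm_smul, norm_smul]
      simp [Real.norm_eq_abs, abs_of_nonneg ht0, abs_of_nonneg (by linarith : (0:ℝ) ≤ 1 - t)]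
    have hsq : ‖t • (A x) + (1 - t) • (B x)‖^2 ≤ t * a2 + (1 - t) * b2 := by
      rw [ha2def, hb2def]
      nlinarith [norm_nonneg (t • (A x) + (1 - t) • (B x)), norm_nonneg (A x), norm_nonneg (B x),
        mul_nonneg (mul_nonneg ht0 (by linarith : (0:ℝ) ≤ 1 - t)) (sq_nonneg (‖A x‖ - ‖B x‖))]
    exact mul_le_mul_of_nonneg_left hsq hfnn
  -- compute the polynomial integral
  have hcalc : (∫ t in (0:ℝ)..1, (t * a1 + (1 - t) * b1) * (t * a2 + (1 - t) * b2))
      = a1 * a2 / 3 + (a1 * b2 + a2 * b1) / 6 + b1 * b2 / 3 := by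
    have hfun : ∀ t : ℝ, (t * a1 + (1 - t) * b1) * (t * a2 + (1 - t) * b2)
        = (a1*a2 - a1*b2 - a2*b1 + b1*b2)*t^2 + (a1*b2 + a2*b1 - 2*b1*b2)*t + b1*b2 := by
      intro t; ring
    simp only [hfun]
    rw [poly_int]
    ring
  -- RHS decomposition
  have hRHS : (inner ℂ ((A ^ 3 + B ^ 3) x) x : ℂ).re = al + be := by
    rw [ContinuousLinearMap.add_apply, inner_add_left]
    rw [Complex.add_re]
  rw [hRHS]
  calc (∫ t in (0:ℝ)..1, (t * a1 + (1 - t) * b1) * ‖t • (A x) + (1 - t) • (B x)‖^2)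
      ≤ ∫ t in (0:ℝ)..1, (t * a1 + (1 - t) * b1) * (t * a2 + (1 - t) * b2) := hmono
    _ = a1 * a2 / 3 + (a1 * b2 + a2 * b1) / 6 + b1 * b2 / 3 := hcalc
    _ ≤ (al + be) / 2 := scalar_lemma a1 a2 al b1 b2 be ha1 ha1' hb1 hb1' ha2 hb2 ha12 hb12 haCS hbCS hal hbe
    _ = 1/2 * (al + be) := by ring
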